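/- arXiv:2006.16948 — 4 statements merged into one kernel-verified Lean document; each statement's English description precedes it below -/
import Mathlib

section
/- Let R(·) be the unique solution of dR/dτ = H(τ) R(τ) with R(0) = 1, where H(τ) is the antisymmetric matrix generated by h(τ) = (ν, g cos τ, f sin τ). Then R(π + τ) = T⁽¹⁾ R(τ) T⁽¹⁾ R(π) for all τ ∈ ℝ, where T⁽¹⁾ = diag(−1,1,1). -/
open Matrix Real

noncomputable def Hmat (f g ν τ : ℝ) : Matrix (Fin 3) (Fin 3) ℝ :=
  !![0, -(f * Real.sin τ), g * Real.cos τ;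
     f * Real.sin τ, 0, -ν;
     -(g * Real.cos τ), ν, 0]

lemma Hmat_entry_bound (f g ν τ : ℝ) (i j : Fin 3) :
    |Hmat f g ν τ i j| ≤ |f| + |g| + |ν| := by
  have hs : |Real.sin τ| ≤ 1 := Real.abs_sin_le_one τ
  have hc : |Real.cos τ| ≤ 1 := Real.abs_cos_le_one τ
  have hf := abs_nonneg f
  have hg := abs_nonneg g
  have hν := abs_nonneg ν
  fin_cases i <;> fin_cases j <;>
    simp [Hmat, abs_mul] <;>
    nlinarith [mul_le_of_le_one_right hf hs, mul_le_of_le_one_right hg hc]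

lemma mul_norm_bound (A z : Matrix (Fin 3) (Fin 3) ℝ) (c : ℝ) (hc : 0 ≤ c)
    (hA : ∀ i j, |A i j| ≤ c) :
    ‖(show (Fin 3 → Fin 3 → ℝ) from A * z)‖ ≤ 3 * c * ‖(show (Fin 3 → Fin 3 → ℝ) from z)‖ := by
  set Z : Fin 3 → Fin 3 → ℝ := z with hZ
  have hznn : (0:ℝ) ≤ ‖Z‖ := norm_nonneg _
  have hz : ∀ k j, |z k j| ≤ ‖Z‖ := by
    intro k j
    calc |z k j| = ‖z k j‖ := (Real.norm_eq_abs _).symm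
      _ ≤ ‖Z k‖ := norm_le_pi_norm (Z k) j
      _ ≤ ‖Z‖ := norm_le_pi_norm Z k
  rw [pi_norm_le_iff_of_nonneg (by positivity)]
  intro i
  rw [pi_norm_le_iff_of_nonneg (by positivity)]
  intro j
  have he : (A * z) i j = A i 0 * z 0 j + A i 1 * z 1 j + A i 2 * z 2 j := by
    simp [Matrix.mul_apply, Fin.sum_univ_three]
  show ‖(A * z) i j‖ ≤ _
  rw [Real.norm_eq_abs, he]
  calc |A i 0 * z 0 j + A i 1 * z 1 j + A i 2 * z 2 j|
      ≤ |A i 0 * z 0 j| + |A i 1 * z 1 j| + |A i 2 * z 2 j| := abs_add_three _ _ _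
    _ ≤ c * ‖Z‖ + c * ‖Z‖ + c * ‖Z‖ := by
        gcongr ?_ + ?_ + ?_ <;> rw [abs_mul] <;>
          exact mul_le_mul (hA _ _) (hz _ _) (abs_nonneg _) hc
    _ = 3 * c * ‖Z‖ := by ring

/-- If `R` solves `R' = H R`, `R 0 = 1`, then `R(π + τ) = T⁽¹⁾ R(τ) T⁽¹⁾ R(π)`. -/
theorem stmt_5 (f g ν : ℝ) (R : ℝ → Matrix (Fin 3) (Fin 3) ℝ)
    (hR : ∀ τ, ∀ i j, HasDerivAt (fun t => R t i j) ((Hmat f g ν τ * R τ) i j) τ)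
    (hR0 : R 0 = 1) (τ : ℝ) :
    R (π + τ) = (Matrix.diagonal ![-1, 1, 1]) * R τ * (Matrix.diagonal ![-1, 1, 1]) * R π := by
  set T : Matrix (Fin 3) (Fin 3) ℝ := Matrix.diagonal ![-1, 1, 1] with hTdef
  have hTT : T * T = 1 := by
    ext i j
    fin_cases i <;> fin_cases j <;>
      simp [hTdef, Matrix.mul_apply, Fin.sum_univ_three, Matrix.one_apply]
  have hconj : ∀ t, Hmat f g ν (π + t) = T * Hmat f g ν t * T := by
    intro t; ext i j
    fin_cases i <;> fin_cases j <;>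
      simp [Hmat, hTdef, Matrix.mul_apply, Fin.sum_univ_three, Real.sin_add, Real.cos_add]
  set C : Matrix (Fin 3) (Fin 3) ℝ := T * R π with hCdef
  set F : ℝ → (Fin 3 → Fin 3 → ℝ) := fun t => R (π + t) with hFdef
  set L : ℝ → (Fin 3 → Fin 3 → ℝ) := fun t => T * (R t * C) with hLdef
  set v : ℝ → (Fin 3 → Fin 3 → ℝ) → (Fin 3 → Fin 3 → ℝ) :=
    fun t x => Hmat f g ν (π + t) * (show Matrix (Fin 3) (Fin 3) ℝ from x) with hvdef
  have K0 : (0:ℝ) ≤ 3 * (|f| + |g| + |ν|) := by positivity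
  have hlip : ∀ t, LipschitzWith ⟨3 * (|f| + |g| + |ν|), K0⟩ (v t) := by
    intro t
    apply LipschitzWith.of_dist_le_mul
    intro x y
    rw [dist_eq_norm, dist_eq_norm]
    set x' : Matrix (Fin 3) (Fin 3) ℝ := x with hx'
    set y' : Matrix (Fin 3) (Fin 3) ℝ := y with hy'
    have hsub : v t x - v t y =
        (show (Fin 3 → Fin 3 → ℝ) from Hmat f g ν (π + t) * (x' - y')) := by
      funext i j
      show (Hmat f g ν (π + t) * x') i j - (Hmat f g ν (π + t) * y') i j
        = (Hmat f g ν (π + t) * (x' - y')) i j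
      simp [Matrix.mul_apply, Matrix.sub_apply, Fin.sum_univ_three]
      ring
    rw [hsub]
    exact mul_norm_bound _ _ _ (by positivity) (Hmat_entry_bound f g ν (π + t))
  have hF' : ∀ t, HasDerivAt F (v t (F t)) t := by
    intro t
    rw [hasDerivAt_pi]; intro i; rw [hasDerivAt_pi]; intro j
    have := (hR (π + t) i j).comp t ((hasDerivAt_id t).const_add π)
    rw [mul_one] at this
    exact this
  have hveq : ∀ t, v t (L t) = (show (Fin 3 → Fin 3 → ℝ) from T * (Hmat f g ν t * R t * C)) := by
    intro t
    show Hmat f g ν (π + t) * (T * (R t * C)) = T * (Hmat f g ν t * R t * C)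
    rw [hconj]
    calc T * Hmat f g ν t * T * (T * (R t * C))
        = T * Hmat f g ν t * (T * T) * (R t * C) := by
          simp only [Matrix.mul_assoc]
      _ = T * (Hmat f g ν t * R t * C) := by rw [hTT]; simp only [Matrix.mul_one, Matrix.mul_assoc]
  have hL' : ∀ t, HasDerivAt L (v t (L t)) t := by
    intro t
    rw [hasDerivAt_pi]; intro i; rw [hasDerivAt_pi]; intro j
    have h1 : HasDerivAt (fun s => ∑ k, R s i k * C k j)
        (∑ k, (Hmat f g ν t * R t) i k * C k j) t :=
      HasDerivAt.fun_sum (fun k _ => (hR t i k).mul_const (C k j))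
    have h2 := h1.const_mul ((![-1,1,1] : Fin 3 → ℝ) i)
    convert h2 using 2
    · rfl
    · show (T * (R _ * C)) i j = _
      rw [hTdef, Matrix.diagonal_mul, Matrix.mul_apply]
    · rw [hveq t]
      show (T * (Hmat f g ν t * R t * C)) i j = _
      rw [hTdef, Matrix.diagonal_mul, Matrix.mul_apply]
  have heq0 : F 0 = L 0 := by
    show R (π + 0) = T * (R 0 * (T * R π))
    rw [hR0, add_zero, Matrix.one_mul, ← Matrix.mul_assoc, hTT, Matrix.one_mul]
  have key : F τ = L τ := by
    have hτ : τ ∈ Set.Ioo (-(|τ| + 1)) (|τ| + 1) := by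
      constructor <;> cases abs_cases τ <;> linarith
    have h0 : (0:ℝ) ∈ Set.Ioo (-(|τ| + 1)) (|τ| + 1) := by
      constructor <;> cases abs_cases τ <;> linarith
    exact ODE_solution_unique_of_mem_Ioo
      (fun t _ => (hlip t).lipschitzOnWith (s := Set.univ))
      h0
      (fun t _ => ⟨hF' t, trivial⟩)
      (fun t _ => ⟨hL' t, trivial⟩)
      heq0 hτ
  have : R (π + τ) = T * (R τ * (T * R π)) := key
  rw [this]
  simp only [Matrix.mul_assoc]
end

section
/- With R(·) as above and T⁽¹³⁾ = diag(−1, 1, −1), one has R(π − τ) = T⁽¹³⁾ R(τ) T⁽¹³⁾ R(π) for all τ ∈ ℝ. In particular, setting τ = π/2 and solving, R(π) = T⁽¹³⁾ R(π/2)ᵀ T⁽¹³⁾ R(π/2). -/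
open Matrix Real

lemma hasDerivAt_matmul {A B : ℝ → Matrix (Fin 3) (Fin 3) ℝ}
    {A' B' : Matrix (Fin 3) (Fin 3) ℝ} {τ : ℝ}
    (hA : ∀ i j, HasDerivAt (fun t => A t i j) (A' i j) τ)
    (hB : ∀ i j, HasDerivAt (fun t => B t i j) (B' i j) τ) :
    ∀ i j, HasDerivAt (fun t => (A t * B t) i j) ((A' * B τ + A τ * B') i j) τ := by
  intro i j
  have h : HasDerivAt (fun t => ∑ k, A t i k * B t k j)
      (∑ k, (A' i k * B τ k j + A τ i k * B' k j)) τ :=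
    HasDerivAt.fun_sum fun k _ => (hA i k).mul (hB k j)
  simpa [Matrix.mul_apply, Matrix.add_apply, Finset.sum_add_distrib] using h

lemma matconst_of_deriv_zero {A : ℝ → Matrix (Fin 3) (Fin 3) ℝ}
    (h : ∀ τ i j, HasDerivAt (fun t => A t i j) 0 τ) (τ : ℝ) : A τ = A 0 := by
  ext i j
  exact is_const_of_deriv_eq_zero (fun t => (h t i j).differentiableAt)
    (fun t => (h t i j).deriv) τ 0

/-- If `R` solves `R' = H R`, `R 0 = 1`, then `R(π − τ) = T⁽¹³⁾ R(τ) T⁽¹³⁾ R(π)`;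
in particular `R(π) = T⁽¹³⁾ R(π/2)ᵀ T⁽¹³⁾ R(π/2)`. -/
theorem stmt_6 (f g ν : ℝ) (R : ℝ → Matrix (Fin 3) (Fin 3) ℝ)
    (hR : ∀ τ, ∀ i j, HasDerivAt (fun t => R t i j) ((Hmat f g ν τ * R τ) i j) τ)
    (hR0 : R 0 = 1) :
    (∀ τ : ℝ, R (π - τ) =
        (Matrix.diagonal ![-1, 1, -1]) * R τ * (Matrix.diagonal ![-1, 1, -1]) * R π) ∧
    R π = (Matrix.diagonal ![-1, 1, -1]) * (R (π/2))ᵀ * (Matrix.diagonal ![-1, 1, -1])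
            * R (π/2) := by
  set T : Matrix (Fin 3) (Fin 3) ℝ := Matrix.diagonal ![-1, 1, -1] with hT
  have hT2 : T * T = 1 := by
    ext i j
    fin_cases i <;> fin_cases j <;>
      simp [hT, Matrix.mul_apply, Fin.sum_univ_three, Matrix.diagonal, Matrix.one_apply]
  have hHT : ∀ τ, (Hmat f g ν τ)ᵀ = -(Hmat f g ν τ) := by
    intro τ
    ext i j
    rw [Matrix.transpose_apply, Matrix.neg_apply]
    fin_cases i <;> fin_cases j <;> simp [Hmat]
  have hKey : ∀ τ, (Hmat f g ν τ)ᵀ * T = T * Hmat f g ν (π - τ) := by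
    intro τ
    rw [hHT]
    ext i j
    fin_cases i <;> fin_cases j <;>
      simp [Hmat, hT, Matrix.mul_apply, Fin.sum_univ_three, Matrix.diagonal,
        Real.sin_pi_sub, Real.cos_pi_sub]
  -- derivative of transpose
  have hRT : ∀ τ i j, HasDerivAt (fun t => (R t)ᵀ i j) ((Hmat f g ν τ * R τ)ᵀ i j) τ := by
    intro τ i j
    simpa [Matrix.transpose_apply] using hR τ j i
  -- orthogonality
  have hOrth : ∀ τ, (R τ)ᵀ * R τ = 1 := by
    have hzero : ∀ τ i j, HasDerivAt (fun t => ((R t)ᵀ * R t) i j) 0 τ := by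
      intro τ i j
      have h := hasDerivAt_matmul (hRT τ) (hR τ) i j
      have hm : ((Hmat f g ν τ * R τ)ᵀ * R τ + (R τ)ᵀ * (Hmat f g ν τ * R τ)) = 0 := by
        rw [Matrix.transpose_mul, hHT]
        simp [Matrix.mul_assoc]
      rwa [hm, Matrix.zero_apply] at h
    intro τ
    have := matconst_of_deriv_zero hzero τ
    rw [this, hR0]
    simp
  have hOrth' : ∀ τ, R τ * (R τ)ᵀ = 1 := fun τ => mul_eq_one_comm.mp (hOrth τ)
  -- derivative of reversed time
  have hRrev : ∀ τ i j, HasDerivAt (fun t => R (π - t) i j)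
      ((-(Hmat f g ν (π - τ) * R (π - τ))) i j) τ := by
    intro τ i j
    have h1 : HasDerivAt (fun t : ℝ => π - t) (-1) τ := (hasDerivAt_id τ).const_sub π
    have := (hR (π - τ) i j).comp τ h1
    simpa [mul_comm, Function.comp_def] using this
  -- N is constant
  have hN : ∀ τ, (R τ)ᵀ * (T * R (π - τ)) = T * R π := by
    have hTc : ∀ (τ : ℝ) (i j : Fin 3), HasDerivAt (fun _ : ℝ => T i j) ((0 : Matrix (Fin 3) (Fin 3) ℝ) i j) τ := by
      intro τ i j; simpa using hasDerivAt_const τ (T i j)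
    have hzero : ∀ τ i j, HasDerivAt (fun t => ((R t)ᵀ * (T * R (π - t))) i j) 0 τ := by
      intro τ i j
      have hinner := hasDerivAt_matmul (hTc τ) (hRrev τ)
      have h := hasDerivAt_matmul (hRT τ) hinner i j
      have hm : ((Hmat f g ν τ * R τ)ᵀ * (T * R (π - τ)) +
          (R τ)ᵀ * ((0 : Matrix (Fin 3) (Fin 3) ℝ) * R (π - τ) +
            T * (-(Hmat f g ν (π - τ) * R (π - τ))))) = 0 := by
        rw [Matrix.transpose_mul]
        rw [Matrix.mul_assoc (R τ)ᵀ, ← Matrix.mul_assoc (Hmat f g ν τ)ᵀ, hKey]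
        simp [Matrix.mul_assoc]
      rwa [hm, Matrix.zero_apply] at h
    intro τ
    have := matconst_of_deriv_zero hzero τ
    rw [this, hR0]
    simp
  have part1 : ∀ τ : ℝ, R (π - τ) = T * R τ * T * R π := by
    intro τ
    have h := congrArg (fun M => T * (R τ * M)) (hN τ)
    rw [← Matrix.mul_assoc (R τ), hOrth', Matrix.one_mul, ← Matrix.mul_assoc, hT2,
      Matrix.one_mul] at h
    rw [h]
    simp [Matrix.mul_assoc]
  refine ⟨part1, ?_⟩
  have h2 : R (π / 2) = T * R (π / 2) * T * R π := by
    have := part1 (π / 2)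
    rwa [show π - π / 2 = π / 2 by ring] at this
  have h4 := congrArg (fun M => T * ((R (π / 2))ᵀ * (T * M))) h2
  simp only [Matrix.mul_assoc] at h4
  simp only [Matrix.mul_assoc]
  rw [h4, ← Matrix.mul_assoc T T (R (π / 2) * (T * R π)), hT2, Matrix.one_mul,
    ← Matrix.mul_assoc (R (π / 2))ᵀ (R (π / 2)), hOrth, Matrix.one_mul,
    ← Matrix.mul_assoc, hT2, Matrix.one_mul]
end

section
/- Let S : ℝ → ℝ³ satisfy S'(τ) = h(τ) × S(τ) with h(τ) = (ν, g cos τ, f sin τ). If S₃(0) = 0 then S₁ and S₂ are even functions of τ and S₃ is an odd function of τ. Conversely if S₁(0) = S₂(0) = 0 then S₁ and S₂ are odd and S₃ is even. -/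
open Matrix Real

/-- The field vector `h(τ) = (ν, g cos τ, f sin τ)`. -/
noncomputable def hvec (f g ν τ : ℝ) : Fin 3 → ℝ :=
  ![ν, g * Real.cos τ, f * Real.sin τ]

lemma cross_lip (f g ν t : ℝ) :
    LipschitzWith ((2 * (|ν| + |g| + |f|)).toNNReal)
      (fun x : Fin 3 → ℝ => crossProduct (hvec f g ν t) x) := by
  apply LipschitzWith.of_dist_le_mul
  intro x y
  rw [dist_eq_norm, dist_eq_norm]
  have h1 : crossProduct (hvec f g ν t) x - crossProduct (hvec f g ν t) y
      = crossProduct (hvec f g ν t) (x - y) := by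
    rw [map_sub]
  rw [h1]
  have hC : (0:ℝ) ≤ 2 * (|ν| + |g| + |f|) := by positivity
  rw [Real.coe_toNNReal _ hC]
  set z := x - y with hz
  have hn0 : |z 0| ≤ ‖z‖ := norm_le_pi_norm z 0
  have hn1 : |z 1| ≤ ‖z‖ := norm_le_pi_norm z 1
  have hn2 : |z 2| ≤ ‖z‖ := norm_le_pi_norm z 2
  have hznn : (0:ℝ) ≤ ‖z‖ := norm_nonneg z
  have hcos : |Real.cos t| ≤ 1 := Real.abs_cos_le_one t
  have hsin : |Real.sin t| ≤ 1 := Real.abs_sin_le_one t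
  apply (pi_norm_le_iff_of_nonneg (by positivity)).2
  intro i
  have hb : ∀ (c s : ℝ) (j : Fin 3), |s| ≤ 1 → |c * s * z j| ≤ |c| * ‖z‖ := by
    intro c s j hs
    have hnj : |z j| ≤ ‖z‖ := by simpa using norm_le_pi_norm z j
    rw [abs_mul, abs_mul]
    have h1 : |s| * |z j| ≤ ‖z‖ := by
      nlinarith [abs_nonneg s, abs_nonneg (z j)]
    nlinarith [abs_nonneg c]
  have hbν : ∀ j : Fin 3, |ν * z j| ≤ |ν| * ‖z‖ := by
    intro j
    rw [abs_mul]
    exact mul_le_mul_of_nonneg_left (norm_le_pi_norm z j) (abs_nonneg _)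
  fin_cases i <;>
  · show |_| ≤ _
    simp only [crossProduct, hvec]
    simp only [LinearMap.mk₂_apply, Matrix.cons_val_zero, Matrix.cons_val_one,
      Matrix.head_cons, Matrix.cons_val_two, Matrix.tail_cons]
    refine le_trans (abs_sub _ _) ?_
    nlinarith [hb g (Real.cos t) 0 hcos, hb g (Real.cos t) 2 hcos,
      hb f (Real.sin t) 0 hsin, hb f (Real.sin t) 1 hsin, hbν 1, hbν 2,
      mul_nonneg (abs_nonneg ν) hznn, mul_nonneg (abs_nonneg g) hznn,
      mul_nonneg (abs_nonneg f) hznn]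

lemma uniq {K : NNReal} (v : ℝ → (Fin 3 → ℝ) → (Fin 3 → ℝ))
    (hv : ∀ t, LipschitzWith K (v t)) (F G : ℝ → Fin 3 → ℝ)
    (hF : ∀ t, HasDerivAt F (v t (F t)) t)
    (hG : ∀ t, HasDerivAt G (v t (G t)) t)
    (h0 : F 0 = G 0) : ∀ t, F t = G t := by
  intro t
  have ht : t ∈ Set.Ioo (-(|t| + 1)) (|t| + 1) := by
    constructor <;> [nlinarith [abs_nonneg t, neg_abs_le t]; nlinarith [le_abs_self t]]
  have h0m : (0:ℝ) ∈ Set.Ioo (-(|t| + 1)) (|t| + 1) := by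
    constructor <;> nlinarith [abs_nonneg t]
  exact ODE_solution_unique_of_mem_Ioo (s := fun _ => Set.univ)
    (fun s _ => (hv s).lipschitzOnWith) h0m
    (fun s _ => ⟨hF s, trivial⟩) (fun s _ => ⟨hG s, trivial⟩) h0 ht

/-- Even/odd structure of solutions of `S' = h × S`: if `S₃(0) = 0` then
`S₁, S₂` are even and `S₃` is odd; if `S₁(0) = S₂(0) = 0` then `S₁, S₂` are
odd and `S₃` is even. -/
theorem stmt_7 (f g ν : ℝ) (S : ℝ → Fin 3 → ℝ)
    (hS : ∀ τ, ∀ i, HasDerivAt (fun t => S t i)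
      ((crossProduct (hvec f g ν τ) (S τ)) i) τ) :
    (S 0 2 = 0 →
      ∀ τ, S (-τ) 0 = S τ 0 ∧ S (-τ) 1 = S τ 1 ∧ S (-τ) 2 = -(S τ 2)) ∧
    (S 0 0 = 0 ∧ S 0 1 = 0 →
      ∀ τ, S (-τ) 0 = -(S τ 0) ∧ S (-τ) 1 = -(S τ 1) ∧ S (-τ) 2 = S τ 2) := by
  set v : ℝ → (Fin 3 → ℝ) → (Fin 3 → ℝ) :=
    fun t x => crossProduct (hvec f g ν t) x with hv_def
  have hvlip : ∀ t, LipschitzWith ((2 * (|ν| + |g| + |f|)).toNNReal) (v t) :=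
    fun t => cross_lip f g ν t
  have hSd : ∀ t, HasDerivAt S (v t (S t)) t := fun t => hasDerivAt_pi.2 (hS t)
  constructor
  · intro h0 τ
    set T : ℝ → Fin 3 → ℝ := fun t => ![S (-t) 0, S (-t) 1, -(S (-t) 2)] with hT_def
    have hTd : ∀ t, HasDerivAt T (v t (T t)) t := by
      intro t
      apply hasDerivAt_pi.2
      intro i
      have hcomp : ∀ j : Fin 3, HasDerivAt (fun u => S (-u) j)
          ((crossProduct (hvec f g ν (-t)) (S (-t))) j * (-1)) t := by
        intro j
        exact HasDerivAt.comp t (hS (-t) j) (hasDerivAt_neg t)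
      fin_cases i
      · change HasDerivAt (fun u => T u 0) (v t (T t) 0) t
        convert hcomp 0 using 1
        all_goals simp [hT_def, hv_def, crossProduct, hvec, Real.cos_neg, Real.sin_neg] <;> ring
      · change HasDerivAt (fun u => T u 1) (v t (T t) 1) t
        convert hcomp 1 using 1
        all_goals simp [hT_def, hv_def, crossProduct, hvec, Real.cos_neg, Real.sin_neg] <;> ring
      · change HasDerivAt (fun u => T u 2) (v t (T t) 2) t
        convert (hcomp 2).neg using 1
        · rfl
        · rfl
        · rfl
        all_goals simp [hT_def, hv_def, crossProduct, hvec, Real.cos_neg, Real.sin_neg] <;> ring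
    have h00 : T 0 = S 0 := by
      funext i
      fin_cases i <;> simp [hT_def, h0]
    have := uniq v hvlip T S hTd hSd h00 τ
    refine ⟨?_, ?_, ?_⟩
    · have := congrFun this 0; simpa [hT_def] using this
    · have := congrFun this 1; simpa [hT_def] using this
    · have h2 := congrFun this 2
      simp only [hT_def] at h2
      simp only [Matrix.cons_val_two, Matrix.tail_cons, Matrix.head_cons] at h2
      linarith
  · intro h0 τ
    set T : ℝ → Fin 3 → ℝ := fun t => ![-(S (-t) 0), -(S (-t) 1), S (-t) 2] with hT_def
    have hTd : ∀ t, HasDerivAt T (v t (T t)) t := by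
      intro t
      apply hasDerivAt_pi.2
      intro i
      have hcomp : ∀ j : Fin 3, HasDerivAt (fun u => S (-u) j)
          ((crossProduct (hvec f g ν (-t)) (S (-t))) j * (-1)) t := by
        intro j
        exact HasDerivAt.comp t (hS (-t) j) (hasDerivAt_neg t)
      fin_cases i
      · change HasDerivAt (fun u => T u 0) (v t (T t) 0) t
        convert (hcomp 0).neg using 1
        · rfl
        · rfl
        · rfl
        all_goals simp [hT_def, hv_def, crossProduct, hvec, Real.cos_neg, Real.sin_neg] <;> ring
      · change HasDerivAt (fun u => T u 1) (v t (T t) 1) t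
        convert (hcomp 1).neg using 1
        · rfl
        · rfl
        · rfl
        all_goals simp [hT_def, hv_def, crossProduct, hvec, Real.cos_neg, Real.sin_neg] <;> ring
      · change HasDerivAt (fun u => T u 2) (v t (T t) 2) t
        convert hcomp 2 using 1
        all_goals simp [hT_def, hv_def, crossProduct, hvec, Real.cos_neg, Real.sin_neg] <;> ring
    have h00 : T 0 = S 0 := by
      funext i
      fin_cases i <;> simp [hT_def, h0.1, h0.2]
    have := uniq v hvlip T S hTd hSd h00 τ
    refine ⟨?_, ?_, ?_⟩
    · have h2 := congrFun this 0
      simp only [hT_def, Matrix.cons_val_zero] at h2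
      linarith
    · have h2 := congrFun this 1
      simp only [hT_def, Matrix.cons_val_one, Matrix.head_cons, Matrix.cons_val_zero] at h2
      linarith
    · have := congrFun this 2; simpa [hT_def] using this
end

section
/- The full-period monodromy matrix R(2π) (given explicitly in terms of r and α as above) has (cos α, sin α, 0)ᵀ as an eigenvector with eigenvalue 1, and its other two eigenvalues are exp(±i ρ) with cos ρ = 1 − 8r²(1−r²); equivalently, Tr R(2π) = 1 + 2(1 − 8r² + 8r⁴). -/
open Matrix Real Complex

noncomputable def Rfull (r α : ℝ) : Matrix (Fin 3) (Fin 3) ℝ :=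
  !![(1 - 2*r^2)^2 + 4*r^2*(1 - r^2) * Real.cos (2*α),
       4*r^2*(1 - r^2) * Real.sin (2*α),
       4*r*Real.sqrt (1 - r^2) * (2*r^2 - 1) * Real.sin α;
     4*r^2*(1 - r^2) * Real.sin (2*α),
       4*r^2*(r^2 - 1) * Real.cos (2*α) + (1 - 2*r^2)^2,
       4*r*(1 - 2*r^2)*Real.sqrt (1 - r^2) * Real.cos α;
     4*r*(1 - 2*r^2)*Real.sqrt (1 - r^2) * Real.sin α,
       4*r*Real.sqrt (1 - r^2) * (2*r^2 - 1) * Real.cos α,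
       8*r^4 - 8*r^2 + 1]

lemma Rfull_det_key (r α : ℝ) (hr0 : (0:ℝ) ≤ r) (hr1 : r ≤ 1) (z : ℂ) :
    (z • (1 : Matrix (Fin 3) (Fin 3) ℂ) - (Rfull r α).map Complex.ofReal).det
      = (z - 1) * (z^2 - 2*((1:ℂ) - 8*(r:ℂ)^2*(1-(r:ℂ)^2))*z + 1) := by
  have hu : ((Real.sqrt (1 - r^2) : ℝ) : ℂ)^2 = 1 - (r:ℂ)^2 := by
    rw [← Complex.ofReal_pow, Real.sq_sqrt (by nlinarith : (0:ℝ) ≤ 1 - r^2)]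
    push_cast; ring
  have hsc : Complex.sin (α:ℂ) ^ 2 = 1 - Complex.cos (α:ℂ) ^ 2 := by
    linear_combination Complex.sin_sq_add_cos_sq (α:ℂ)
  rw [Matrix.det_fin_three]
  simp only [Rfull, Matrix.sub_apply, Matrix.smul_apply, Matrix.one_apply, Matrix.map_apply,
    Matrix.cons_val', Matrix.cons_val_zero, Matrix.cons_val_one, Matrix.head_cons,
    Matrix.empty_val', Matrix.cons_val_fin_one, Matrix.head_fin_const, Matrix.of_apply,
    Matrix.cons_val_two, Matrix.tail_cons]
  push_cast
  rw [show ((2:ℂ)*α) = 2*(α:ℂ) by ring, Complex.cos_two_mul', Complex.sin_two_mul]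
  norm_num
  set ca : ℂ := Complex.cos (α:ℂ)
  set sa : ℂ := Complex.sin (α:ℂ)
  set u : ℂ := ((Real.sqrt (1 - r^2) : ℝ) : ℂ)
  linear_combination ((-16*(r:ℂ)^2*u^2 + 16*(r:ℂ)^4 + 64*(r:ℂ)^4*u^2 + 16*(r:ℂ)^4*sa^2 - 64*(r:ℂ)^4*sa^2*u^2 + 16*(r:ℂ)^4*ca^2 - 64*(r:ℂ)^4*ca^2*u^2 - 160*(r:ℂ)^6 - 64*(r:ℂ)^6*u^2 - 160*(r:ℂ)^6*sa^2 + 320*(r:ℂ)^6*sa^2*u^2 - 160*(r:ℂ)^6*ca^2 + 320*(r:ℂ)^6*ca^2*u^2 + 400*(r:ℂ)^8 + 400*(r:ℂ)^8*sa^2 - 512*(r:ℂ)^8*sa^2*u^2 + 400*(r:ℂ)^8*ca^2 - 512*(r:ℂ)^8*ca^2*u^2 - 384*(r:ℂ)^10 - 384*(r:ℂ)^10*sa^2 + 256*(r:ℂ)^10*sa^2*u^2 - 384*(r:ℂ)^10*ca^2 + 256*(r:ℂ)^10*ca^2*u^2 + 128*(r:ℂ)^12 + 128*(r:ℂ)^12*sa^2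 + 128*(r:ℂ)^12*ca^2 + 16*z*(r:ℂ)^2*u^2 - 16*z*(r:ℂ)^4 - 64*z*(r:ℂ)^4*u^2 - 16*z*(r:ℂ)^4*sa^2 - 16*z*(r:ℂ)^4*ca^2 + 32*z*(r:ℂ)^6 + 64*z*(r:ℂ)^6*u^2 + 32*z*(r:ℂ)^6*sa^2 + 32*z*(r:ℂ)^6*ca^2 - 16*z*(r:ℂ)^8 - 16*z*(r:ℂ)^8*sa^2 - 16*z*(r:ℂ)^8*ca^2) * hsc)
    + ((-16*(r:ℂ)^2 + 64*(r:ℂ)^4 - 64*(r:ℂ)^6 + 16*z*(r:ℂ)^2 - 64*z*(r:ℂ)^4 + 64*z*(r:ℂ)^6) * hu)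

lemma mem_spectrum_of_det_zero (M : Matrix (Fin 3) (Fin 3) ℂ) (z : ℂ)
    (h : (z • (1 : Matrix (Fin 3) (Fin 3) ℂ) - M).det = 0) : z ∈ spectrum ℂ M := by
  rw [spectrum.mem_iff]
  intro hunit
  have h2 : IsUnit (z • (1 : Matrix (Fin 3) (Fin 3) ℂ) - M) := by
    have : algebraMap ℂ (Matrix (Fin 3) (Fin 3) ℂ) z = z • 1 := by
      rw [Algebra.algebraMap_eq_smul_one]
    rwa [this] at hunit
  rw [Matrix.isUnit_iff_isUnit_det, h] at h2
  exact h2.ne_zero rfl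

/-- `(cos α, sin α, 0)` is a fixed vector of `R(2π)`, the other two eigenvalues
are `exp(±iρ)` with `cos ρ = 1 − 8r²(1−r²)`, and `Tr R(2π) = 1 + 2(1−8r²+8r⁴)`. -/
theorem stmt_10 (r α : ℝ) (hr : r ∈ Set.Icc (0:ℝ) 1) :
    (Rfull r α).mulVec ![Real.cos α, Real.sin α, 0] = ![Real.cos α, Real.sin α, 0] ∧
    (Rfull r α).trace = 1 + 2 * (1 - 8*r^2 + 8*r^4) ∧
    ∃ ρ : ℝ, Real.cos ρ = 1 - 8*r^2*(1 - r^2) ∧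
      Complex.exp (Complex.I * ρ) ∈ spectrum ℂ ((Rfull r α).map Complex.ofReal) ∧
      Complex.exp (-(Complex.I * ρ)) ∈ spectrum ℂ ((Rfull r α).map Complex.ofReal) := by
  obtain ⟨hr0, hr1⟩ := hr
  have hpy := Real.sin_sq_add_cos_sq α
  refine ⟨?_, ?_, ?_⟩
  · funext i
    fin_cases i
    · simp [Rfull, Matrix.mulVec, dotProduct, Fin.sum_univ_three,
        Real.cos_two_mul', Real.sin_two_mul]
      linear_combination (4*r^2*(1-r^2)*Real.cos α) * hpy
    · simp [Rfull, Matrix.mulVec, dotProduct, Fin.sum_univ_three,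
        Real.cos_two_mul', Real.sin_two_mul]
      linear_combination (4*r^2*(1-r^2)*Real.sin α) * hpy
    · simp [Rfull, Matrix.mulVec, dotProduct, Fin.sum_univ_three]
      ring
  · simp [Matrix.trace, Rfull, Fin.sum_univ_three, Matrix.diag]
    ring
  · have hsq : (0:ℝ) ≤ (2*r^2-1)^2 := sq_nonneg _
    have hb1 : (-1:ℝ) ≤ 1 - 8*r^2*(1 - r^2) := by nlinarith
    have hb2 : 1 - 8*r^2*(1 - r^2) ≤ 1 := by nlinarith [mul_nonneg (mul_nonneg hr0 hr0) (by nlinarith : (0:ℝ) ≤ 1 - r^2)]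
    refine ⟨Real.arccos (1 - 8*r^2*(1 - r^2)), Real.cos_arccos hb1 hb2, ?_, ?_⟩
    all_goals
      set ρ := Real.arccos (1 - 8*r^2*(1 - r^2)) with hρ
    all_goals
      have hcos : Complex.cos (ρ:ℂ) = 1 - 8*(r:ℂ)^2*(1-(r:ℂ)^2) := by
        rw [← Complex.ofReal_cos, hρ, Real.cos_arccos hb1 hb2]; push_cast; ring
    all_goals
      have hpyc := Complex.sin_sq_add_cos_sq (ρ:ℂ)
    all_goals
      apply mem_spectrum_of_det_zero
      rw [Rfull_det_key r α hr0 hr1, ← hcos]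
      apply mul_eq_zero_of_right
    · have hE : Complex.exp (Complex.I * ρ)
          = Complex.cos (ρ:ℂ) + Complex.sin (ρ:ℂ) * Complex.I := by
        rw [mul_comm, Complex.exp_mul_I]
      rw [hE]
      linear_combination (Complex.sin (ρ:ℂ))^2 * Complex.I_sq - hpyc
    · have hE : Complex.exp (-(Complex.I * ρ))
          = Complex.cos (ρ:ℂ) - Complex.sin (ρ:ℂ) * Complex.I := by
        rw [show -(Complex.I * (ρ:ℂ)) = (-(ρ:ℂ)) * Complex.I by ring, Complex.exp_mul_I]
        simp [Complex.cos_neg, Complex.sin_neg]; ring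
      rw [hE]
      linear_combination (Complex.sin (ρ:ℂ))^2 * Complex.I_sq - hpyc
end
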